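/- In a rooted tree T with edge lengths and depot o, fix F > 0 and a set R' of requests at vertices. Suppose R' is served by a collection 𝒫 of subtrees (trips) of T, each containing o and having total edge length at most F. Then for every edge e = (u, v) with v the child, the number of subtrees in 𝒫 containing e is at least ⌈mst_e(R')/F⌉, where mst_e(R') is the total length of the minimal subtree of T containing o and all request locations of R' that are descendants of e. -/

import Mathlib

open scoped Classical

/-- A rooted tree on a finite vertex set `V` is given by parent pointers:
`parent o = o` and every vertex reaches the root `o` by iterating `parent`.
Each non-root vertex `u` stands for the edge `(parent u, u)` of positive
length `ℓ u`; `w` is a descendant of `u` iff `parent^[n] w = u` for some `n`.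
Every vertex is within distance `F` of `o` (`hdist`).  The requests `R'` are
served by trips `P i`, each a subtree containing `o` (a parent-closed vertex set)
of total edge length at most `F`.  Then for every edge, with child endpoint
`v ≠ o`, the number of trips containing the edge is at least
`⌈mst_e(R')/F⌉`, where `mst_e(R')` is the total length of the minimal subtree
containing `o` and the requests of `R'` below `v`. -/

private lemma sum_biUnion_le_aux {α β : Type*} [DecidableEq α] [DecidableEq β] (f : β → ℝ)
    (hf : ∀ b, 0 ≤ f b) (s : Finset α) (t : α → Finset β) :
    ∑ b ∈ s.biUnion t, f b ≤ ∑ a ∈ s, ∑ b ∈ t a, f b := by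
  induction s using Finset.induction_on with
  | empty => simp
  | @insert a s ha ih =>
    rw [Finset.biUnion_insert, Finset.sum_insert ha]
    calc ∑ b ∈ t a ∪ s.biUnion t, f b
        = ∑ b ∈ t a, f b + ∑ b ∈ s.biUnion t \ t a, f b := by
          rw [← Finset.sum_union Finset.disjoint_sdiff, Finset.union_sdiff_self_eq_union]
      _ ≤ ∑ b ∈ t a, f b + ∑ b ∈ s.biUnion t, f b :=
          add_le_add le_rfl
            (Finset.sum_le_sum_of_subset_of_nonneg Finset.sdiff_subset (fun b _ _ => hf b))
      _ ≤ _ := add_le_add le_rfl ih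

theorem stmt_11 {V : Type*} [Fintype V] (o : V) (parent : V → V) (ℓ : V → ℝ)
    (F : ℝ) (hF : 0 < F)
    (hroot : parent o = o) (htree : ∀ v, ∃ n, parent^[n] v = o)
    (hℓ : ∀ v, v ≠ o → 0 < ℓ v)
    (hdist : ∀ v : V,
      ∑ u ∈ Finset.univ.filter (fun u => u ≠ o ∧ ∃ n, parent^[n] v = u), ℓ u ≤ F)
    (R' : Finset V)
    {ι : Type*} [Fintype ι] (P : ι → Finset V)
    (htripRoot : ∀ i, o ∈ P i)
    (htripClosed : ∀ i, ∀ u ∈ P i, parent u ∈ P i)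
    (htripLen : ∀ i, ∑ u ∈ (P i).filter (fun u => u ≠ o), ℓ u ≤ F)
    (hcover : ∀ w ∈ R', ∃ i, w ∈ P i)
    (v : V) (hv : v ≠ o) :
    ⌈(∑ u ∈ Finset.univ.filter (fun u => u ≠ o ∧
        ∃ w ∈ R', (∃ n, parent^[n] w = v) ∧ ∃ m, parent^[m] w = u), ℓ u) / F⌉
      ≤ ((Finset.univ.filter (fun i => v ∈ P i)).card : ℤ) := by
  classical
  set I := Finset.univ.filter (fun i => v ∈ P i) with hI
  set S := Finset.univ.filter (fun u => u ≠ o ∧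
      ∃ w ∈ R', (∃ n, parent^[n] w = v) ∧ ∃ m, parent^[m] w = u) with hS
  have hanc : ∀ i, ∀ w ∈ P i, ∀ n, parent^[n] w ∈ P i := by
    intro i w hw n
    induction n with
    | zero => simpa using hw
    | succ k ih =>
      rw [Function.iterate_succ_apply']
      exact htripClosed i _ ih
  have hsub : S ⊆ I.biUnion (fun i => (P i).filter (fun u => u ≠ o)) := by
    intro u hu
    simp only [hS, Finset.mem_filter, Finset.mem_univ, true_and] at hu
    obtain ⟨hu0, w, hwR, ⟨n, hn⟩, m, hm⟩ := hu
    obtain ⟨i, hi⟩ := hcover w hwR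
    refine Finset.mem_biUnion.2 ⟨i, ?_, ?_⟩
    · simp only [hI, Finset.mem_filter, Finset.mem_univ, true_and]
      exact hn ▸ hanc i w hi n
    · exact Finset.mem_filter.2 ⟨hm ▸ hanc i w hi m, hu0⟩
  have hnonneg : ∀ u ∈ I.biUnion (fun i => (P i).filter (fun u => u ≠ o)), 0 ≤ ℓ u := by
    intro u hu
    obtain ⟨i, _, hu⟩ := Finset.mem_biUnion.1 hu
    exact (hℓ u (Finset.mem_filter.1 hu).2).le
  have h1 : ∑ u ∈ S, ℓ u ≤ ∑ i ∈ I, ∑ u ∈ (P i).filter (fun u => u ≠ o), ℓ u := by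
    calc ∑ u ∈ S, ℓ u ≤ ∑ u ∈ I.biUnion (fun i => (P i).filter (fun u => u ≠ o)), ℓ u :=
          Finset.sum_le_sum_of_subset_of_nonneg hsub (fun u hu _ => hnonneg u hu)
      _ ≤ ∑ i ∈ I, ∑ u ∈ (P i).filter (fun u => u ≠ o), ℓ u := by
          have : ∀ u ∈ I.biUnion (fun i => (P i).filter (fun u => u ≠ o)),
              ℓ u = (fun u => if u = o then 0 else ℓ u) u := by
            intro u hu
            obtain ⟨i, -, hu'⟩ := Finset.mem_biUnion.1 hu
            simp [(Finset.mem_filter.1 hu').2]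
          rw [Finset.sum_congr rfl this]
          refine (sum_biUnion_le_aux _ (fun b => ?_) I _).trans ?_
          · by_cases h : b = o
            · simp [h]
            · simp only [h, if_false]; exact (hℓ b h).le
          · refine Finset.sum_le_sum fun i _ => le_of_eq ?_
            refine Finset.sum_congr rfl fun u hu => ?_
            simp [(Finset.mem_filter.1 hu).2]
  have h2 : ∑ u ∈ S, ℓ u ≤ (I.card : ℝ) * F := by
    calc ∑ u ∈ S, ℓ u ≤ ∑ i ∈ I, ∑ u ∈ (P i).filter (fun u => u ≠ o), ℓ u := h1
      _ ≤ ∑ _i ∈ I, F := Finset.sum_le_sum fun i _ => htripLen i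
      _ = (I.card : ℝ) * F := by rw [Finset.sum_const, nsmul_eq_mul]
  rw [Int.ceil_le]
  push_cast
  rw [div_le_iff₀ hF]
  exact h2
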